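/- The maximum principle fails on the bi-tree: for every constant C > 0 there exist an integer N ≥ 1 and a measure μ on the boundary of the bi-tree T² of depth N such that V^μ(α) ≤ 1 for every α in supp μ, yet sup_{α∈T²} V^μ(α) ≥ C. -/

import Mathlib

open Finset

def strings : ℕ → Finset (List Bool)
  | 0 => {([] : List Bool)}
  | N + 1 =>
      {([] : List Bool)} ∪ (strings N).image (List.cons true) ∪ (strings N).image (List.cons false)

/-- Vertices of the bi-tree `T²` of depth `N`: pairs of binary strings of length at most `N`,
ordered by `(α,β) ≤ (α',β')` iff `α' <+: α` and `β' <+: β`. -/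
def biVertices (N : ℕ) : Finset (List Bool × List Bool) := strings N ×ˢ strings N

/-- `𝕀 f (p) = ∑_{p' ≥ p} f p'`. -/
noncomputable def biI (N : ℕ) (f : List Bool × List Bool → ℝ) (p : List Bool × List Bool) : ℝ :=
  ∑ q ∈ (biVertices N).filter (fun q => q.1 <+: p.1 ∧ q.2 <+: p.2), f q

/-- `𝕀* f (p) = ∑_{p' ≤ p} f p'`. -/
noncomputable def biIstar (N : ℕ) (f : List Bool × List Bool → ℝ) (p : List Bool × List Bool) : ℝ :=
  ∑ q ∈ (biVertices N).filter (fun q => p.1 <+: q.1 ∧ p.2 <+: q.2), f q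

/-- The potential `V^μ = 𝕀 (𝕀* μ)` on the bi-tree. -/
noncomputable def biV (N : ℕ) (μ : List Bool × List Bool → ℝ) : List Bool × List Bool → ℝ :=
  biI N (biIstar N μ)

/-- The total mass `|μ|`. -/
noncomputable def biMass (N : ℕ) (μ : List Bool × List Bool → ℝ) : ℝ :=
  ∑ p ∈ biVertices N, μ p

/-- A measure on the boundary `∂T²`: a nonnegative function vanishing off pairs of strings
both of length exactly `N`. -/
def IsBiMeasureOnBoundary (N : ℕ) (μ : List Bool × List Bool → ℝ) : Prop :=
  (∀ p, 0 ≤ μ p) ∧ ∀ p, μ p ≠ 0 → p.1.length = N ∧ p.2.length = N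

/-- The energy `E[ν] = ∑_{α∈T²} (𝕀*ν(α))²`. -/
noncomputable def biEnergy (N : ℕ) (ν : List Bool × List Bool → ℝ) : ℝ :=
  ∑ p ∈ biVertices N, (biIstar N ν p) ^ 2

/-- The partial energy `E_ε[ν] = ∑_{α∈T² : V^ν(α) ≤ ε} (𝕀*ν(α))²`. -/
noncomputable def biPartialEnergy (N : ℕ) (ν : List Bool × List Bool → ℝ) (ε : ℝ) : ℝ :=
  ∑ p ∈ (biVertices N).filter (fun p => biV N ν p ≤ ε), (biIstar N ν p) ^ 2

/-- `cap(E) = inf { ∑ f² : f ≥ 0, 𝕀f ≥ 1 on E }` on the bi-tree of depth `N`. -/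
noncomputable def biCap (N : ℕ) (E : Set (List Bool × List Bool)) : ℝ :=
  sInf { t : ℝ | ∃ f : List Bool × List Bool → ℝ, (∀ p, 0 ≤ f p) ∧
    (∀ p ∈ E, 1 ≤ biI N f p) ∧ t = ∑ p ∈ biVertices N, (f p) ^ 2 }

/-- Superadditivity in each variable on the bi-tree of depth `N`. -/
def BiSuperadditive (N : ℕ) (g : List Bool × List Bool → ℝ) : Prop :=
  (∀ α β : List Bool, α.length < N → β.length ≤ N →
    g (α ++ [false], β) + g (α ++ [true], β) ≤ g (α, β)) ∧
  (∀ α β : List Bool, α.length ≤ N → β.length < N →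
    g (α, β ++ [false]) + g (α, β ++ [true]) ≤ g (α, β))

/- auxiliary lemmas -/
lemma mem_strings {N : ℕ} {l : List Bool} : l ∈ strings N ↔ l.length ≤ N := by
  induction N generalizing l with
  | zero => simp [strings, List.length_eq_zero_iff]
  | succ n ih =>
    cases l with
    | nil => simp [strings]
    | cons b t => cases b <;> simp [strings, ih, Nat.succ_le_succ_iff]

def full : ℕ → Finset (List Bool)
  | 0 => {([] : List Bool)}
  | m + 1 => (full m).image (List.cons true) ∪ (full m).image (List.cons false)

lemma mem_full {m : ℕ} {l : List Bool} : l ∈ full m ↔ l.length = m := by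
  induction m generalizing l with
  | zero => simp [full, List.length_eq_zero_iff]
  | succ n ih =>
    cases l with
    | nil => simp [full]
    | cons b t => cases b <;> simp [full, ih]

lemma card_full (m : ℕ) : (full m).card = 2 ^ m := by
  induction m with
  | zero => rfl
  | succ n ih =>
    rw [full, Finset.card_union_of_disjoint, Finset.card_image_of_injective _ (fun a b => by simp),
      Finset.card_image_of_injective _ (fun a b => by simp), ih]
    · ring
    · simp [Finset.disjoint_left]

lemma card_ext {N : ℕ} (y : List Bool) (hy : y.length ≤ N) :
    (((strings N).filter (fun l => l.length = N ∧ y <+: l)).card : ℕ) = 2 ^ (N - y.length) := by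
  have : (strings N).filter (fun l => l.length = N ∧ y <+: l)
      = (full (N - y.length)).image (fun t => y ++ t) := by
    ext l
    simp only [Finset.mem_filter, mem_strings, Finset.mem_image, mem_full]
    constructor
    · rintro ⟨_, hl, t, rfl⟩
      exact ⟨t, by simp at hl ⊢; omega, rfl⟩
    · rintro ⟨t, ht, rfl⟩
      refine ⟨?_, ?_, List.prefix_append _ _⟩ <;> simp <;> omega
  rw [this, Finset.card_image_of_injective _ (List.append_right_injective y), card_full]

def ind (N : ℕ) (ω : List Bool) (α : List Bool) : ℝ :=
  if α.length = N ∧ ω <+: α then 1 else 0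

noncomputable def SA (N : ℕ) (ω x : List Bool) : ℝ :=
  ∑ α ∈ (strings N).filter (fun α => x <+: α), ind N ω α

noncomputable def FA (N : ℕ) (ω α : List Bool) : ℝ :=
  ∑ x ∈ (strings N).filter (fun x => x <+: α), SA N ω x

lemma split_sum (N : ℕ) (P Q : List Bool → Prop) [DecidablePred P] [DecidablePred Q]
    (n : ℕ) (w : ℕ → ℝ) (f g : ℕ → List Bool → ℝ) :
    ∑ q ∈ (biVertices N).filter (fun q => P q.1 ∧ Q q.2),
        (∑ k ∈ range n, w k * (f k q.1 * g k q.2))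
      = ∑ k ∈ range n,
          w k * ((∑ a ∈ (strings N).filter P, f k a) * (∑ b ∈ (strings N).filter Q, g k b)) := by
  rw [biVertices, Finset.filter_product, Finset.sum_product]
  refine (Finset.sum_congr rfl fun a _ => Finset.sum_comm).trans ?_
  refine Finset.sum_comm.trans ?_
  refine Finset.sum_congr rfl fun k _ => ?_
  rw [Finset.sum_mul_sum]
  simp only [Finset.mul_sum]

lemma biV_eq (N n : ℕ) (w : ℕ → ℝ) (ω τ : ℕ → List Bool) (p : List Bool × List Bool) :
    biV N (fun r => ∑ k ∈ range n, w k * (ind N (ω k) r.1 * ind N (τ k) r.2)) p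
      = ∑ k ∈ range n, w k * (FA N (ω k) p.1 * FA N (τ k) p.2) := by
  rw [biV, biI]
  have h1 : ∀ q ∈ (biVertices N).filter (fun q => q.1 <+: p.1 ∧ q.2 <+: p.2),
      biIstar N (fun r => ∑ k ∈ range n, w k * (ind N (ω k) r.1 * ind N (τ k) r.2)) q
        = ∑ k ∈ range n, w k * (SA N (ω k) q.1 * SA N (τ k) q.2) := by
    intro q _
    rw [biIstar]
    exact split_sum N (fun a => q.1 <+: a) (fun b => q.2 <+: b) n w
      (fun k => ind N (ω k)) (fun k => ind N (τ k))
  refine (Finset.sum_congr rfl h1).trans ?_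
  exact split_sum N (fun a => a <+: p.1) (fun b => b <+: p.2) n w
    (fun k a => SA N (ω k) a) (fun k b => SA N (τ k) b)

lemma SA_eq {N : ℕ} (ω x : List Bool) (hω : ω.length ≤ N) (hx : x.length ≤ N) :
    SA N ω x = if x <+: ω then (2:ℝ)^(N - ω.length)
      else if ω <+: x then (2:ℝ)^(N - x.length) else 0 := by
  have key : SA N ω x
      = (((strings N).filter (fun α => x <+: α ∧ α.length = N ∧ ω <+: α)).card : ℝ) := by
    rw [SA]
    have : ∀ α ∈ (strings N).filter (fun α => x <+: α),
        ind N ω α = if α.length = N ∧ ω <+: α then (1:ℝ) else 0 := fun α _ => rfl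
    rw [Finset.sum_congr rfl this, Finset.sum_boole, Finset.filter_filter]
  by_cases h1 : x <+: ω
  · rw [key, if_pos h1]
    have : (strings N).filter (fun α => x <+: α ∧ α.length = N ∧ ω <+: α)
        = (strings N).filter (fun α => α.length = N ∧ ω <+: α) := by
      apply Finset.filter_congr
      intro α _
      exact ⟨fun h => h.2, fun h => ⟨h1.trans h.2, h⟩⟩
    rw [this]
    rw_mod_cast [card_ext ω hω]
  · rw [key, if_neg h1]
    by_cases h2 : ω <+: x
    · rw [if_pos h2]
      have : (strings N).filter (fun α => x <+: α ∧ α.length = N ∧ ω <+: α)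
          = (strings N).filter (fun α => α.length = N ∧ x <+: α) := by
        apply Finset.filter_congr
        intro α _
        exact ⟨fun h => ⟨h.2.1, h.1⟩, fun h => ⟨h.2, h.1, h2.trans h.2⟩⟩
      rw [this]
      rw_mod_cast [card_ext x hx]
    · rw [if_neg h2]
      have : (strings N).filter (fun α => x <+: α ∧ α.length = N ∧ ω <+: α) = ∅ := by
        apply Finset.filter_false_of_mem
        rintro α _ ⟨hxa, _, hoa⟩
        rcases List.prefix_or_prefix_of_prefix hxa hoa with h | h
        · exact h1 h
        · exact h2 h
      simp [this]

lemma SA_nonneg {N : ℕ} (ω x : List Bool) : 0 ≤ SA N ω x := by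
  apply Finset.sum_nonneg
  intro α _
  unfold ind
  positivity

lemma FA_nonneg {N : ℕ} (ω α : List Bool) : 0 ≤ FA N ω α :=
  Finset.sum_nonneg fun x _ => SA_nonneg ω x

lemma FA_eq {N : ℕ} (ω α : List Bool) (hα : α.length = N) :
    FA N ω α = ∑ i ∈ range (N+1), SA N ω (α.take i) := by
  rw [FA]
  have h1 : (strings N).filter (fun x => x <+: α) = (range (N+1)).image (α.take ·) := by
    ext x
    simp only [Finset.mem_filter, mem_strings, Finset.mem_image, Finset.mem_range]
    constructor
    · rintro ⟨hlen, hpre⟩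
      exact ⟨x.length, by omega, (List.prefix_iff_eq_take.mp hpre).symm⟩
    · rintro ⟨i, hi, rfl⟩
      exact ⟨by rw [List.length_take]; omega, List.take_prefix _ _⟩
  rw [h1, Finset.sum_image]
  intro i hi j hj h
  simp only [Finset.coe_range, Set.mem_Iio, Finset.mem_coe, Finset.mem_range] at hi hj
  have hii : (α.take i).length = i := by rw [List.length_take]; omega
  have hjj : (α.take j).length = j := by rw [List.length_take]; omega
  beta_reduce at h
  rw [h] at hii; omega

def omg (s : ℕ) : List Bool := List.replicate s true ++ [false]

lemma omg_length (s : ℕ) : (omg s).length = s + 1 := by simp [omg]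

lemma replicate_prefix_omg {i s : ℕ} (h : i ≤ s) : List.replicate i true <+: omg s :=
  ⟨List.replicate (s - i) true ++ [false], by
    rw [omg, ← List.append_assoc, ← List.replicate_add]
    congr 2
    omega⟩

lemma omg_prefix_omg {s t : ℕ} (h : omg s <+: omg t) : s = t := by
  have hl := h.length_le
  rw [omg_length, omg_length] at hl
  by_contra hne
  have hst : s < t := by omega
  have h1 : (omg s)[s]'(by rw [omg_length]; omega) = (omg t)[s]'(by rw [omg_length]; omega) :=
    h.getElem _
  have h2 : (omg s)[s]'(by rw [omg_length]; omega) = false := by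
    simp [omg]
  have h3 : (omg t)[s]'(by rw [omg_length]; omega) = true := by
    show (List.replicate t true ++ [false])[s]'(by simp; omega) = true
    rw [List.getElem_append_left (by simp; omega)]
    simp
  rw [h2, h3] at h1
  exact Bool.false_ne_true h1

lemma take_of_prefix {t : ℕ} {α : List Bool} (h : omg t <+: α) : α.take (t+1) = omg t := by
  have := List.prefix_iff_eq_take.mp h
  rw [omg_length] at this
  exact this.symm

lemma take_mono_prefix {m n : ℕ} (α : List Bool) (h : m ≤ n) : α.take m <+: α.take n := by
  rw [List.prefix_take_iff]
  exact ⟨List.take_prefix _ _, by rw [List.length_take]; omega⟩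

lemma take_pre_omg {N s t i : ℕ} {α : List Bool} (hα : α.length = N) (hiN : i ≤ N)
    (hpre : omg t <+: α) (h : α.take i <+: omg s) : i ≤ min (s+1) (t+1) := by
  have hlen : (α.take i).length = i := by rw [List.length_take]; omega
  have h1 : i ≤ s + 1 := by
    have := h.length_le
    rw [hlen, omg_length] at this
    exact this
  refine le_min h1 ?_
  by_contra hc
  have h2 : α.take (t+1) <+: α.take i := take_mono_prefix α (by omega)
  rw [take_of_prefix hpre] at h2
  have := omg_prefix_omg (h2.trans h)
  omega

lemma geo_bound (N a : ℕ) (ha : a ≤ N) :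
    ∑ i ∈ range (N+1), (if a ≤ i then (2:ℝ)^(N-i) else 0) ≤ 2 * 2^(N-a) := by
  rw [← Finset.sum_filter]
  have h1 : (range (N+1)).filter (fun i => a ≤ i) = Finset.Ico a (N+1) := by
    ext i; simp [Finset.mem_Ico, Finset.mem_range]; omega
  rw [h1, Finset.sum_Ico_eq_sum_range]
  have h2 : N + 1 - a = (N - a) + 1 := by omega
  rw [h2]
  have h3 : ∀ k ∈ range ((N-a)+1), (2:ℝ)^(N-(a+k)) = 2^((N-a)+1-1-k) := by
    intro k hk
    simp only [Finset.mem_range] at hk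
    congr 1
    omega
  rw [Finset.sum_congr rfl h3, Finset.sum_range_reflect]
  have h4 : ∑ k ∈ range ((N-a)+1), (2:ℝ)^k = 2^((N-a)+1) - 1 := by
    have := geom_sum_eq (by norm_num : (2:ℝ) ≠ 1) ((N-a)+1)
    rw [this]; ring
  rw [h4, pow_succ]
  linarith

lemma const_count (N m : ℕ) (hm : m ≤ N) (c : ℝ) :
    ∑ i ∈ range (N+1), (if i ≤ m then c else 0) = ((m:ℝ)+1) * c := by
  rw [← Finset.sum_filter]
  have h1 : (range (N+1)).filter (fun i => i ≤ m) = range (m+1) := by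
    ext i; simp [Finset.mem_range]; omega
  rw [h1, Finset.sum_const, Finset.card_range, nsmul_eq_mul]
  push_cast; ring

lemma FA_lower {N s : ℕ} (hs : s + 1 ≤ N) :
    ((s:ℝ)+1) * 2^(N-(s+1)) ≤ FA N (omg s) (List.replicate N true) := by
  rw [FA_eq _ _ (by simp)]
  have key : ∀ i ∈ range (s+1), SA N (omg s) ((List.replicate N true).take i) = (2:ℝ)^(N-(s+1)) := by
    intro i hi
    simp only [Finset.mem_range] at hi
    rw [List.take_replicate]
    have hmin : min i N = i := by omega
    rw [hmin, SA_eq _ _ (by rw [omg_length]; omega) (by simp; omega),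
      if_pos (replicate_prefix_omg (by omega)), omg_length]
  calc ((s:ℝ)+1) * 2^(N-(s+1)) = ∑ i ∈ range (s+1), (2:ℝ)^(N-(s+1)) := by
        rw [Finset.sum_const, Finset.card_range, nsmul_eq_mul]; push_cast; ring
    _ = ∑ i ∈ range (s+1), SA N (omg s) ((List.replicate N true).take i) :=
        (Finset.sum_congr rfl key).symm
    _ ≤ ∑ i ∈ range (N+1), SA N (omg s) ((List.replicate N true).take i) := by
        apply Finset.sum_le_sum_of_subset_of_nonneg
        · intro i hi; simp only [Finset.mem_range] at *; omega
        · intro i _ _; exact SA_nonneg _ _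

lemma FA_upper {N s t : ℕ} (hs : s + 1 ≤ N) (α : List Bool) (hα : α.length = N)
    (hpre : omg t <+: α) :
    FA N (omg s) α ≤ ((min (s+1) (t+1) : ℕ) + 3 : ℝ) * 2^(N-(s+1)) := by
  rw [FA_eq _ _ hα]
  set m := min (s+1) (t+1) with hm
  have key : ∀ i ∈ range (N+1), SA N (omg s) (α.take i)
      ≤ (if i ≤ m then (2:ℝ)^(N-(s+1)) else 0) + (if s+1 ≤ i then (2:ℝ)^(N-i) else 0) := by
    intro i hi
    simp only [Finset.mem_range] at hi
    have hiN : i ≤ N := by omega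
    have hlen : (α.take i).length = i := by rw [List.length_take]; omega
    rw [SA_eq _ _ (by rw [omg_length]; omega) (by rw [hlen]; omega), omg_length, hlen]
    by_cases c1 : α.take i <+: omg s
    · rw [if_pos c1]
      have him : i ≤ m := take_pre_omg hα hiN hpre c1
      rw [if_pos him]
      have : (0:ℝ) ≤ if s+1 ≤ i then (2:ℝ)^(N-i) else 0 := by positivity
      linarith
    · rw [if_neg c1]
      by_cases c2 : omg s <+: α.take i
      · rw [if_pos c2]
        have hsi : s + 1 ≤ i := by
          have := c2.length_le
          rw [omg_length, hlen] at this
          exact this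
        rw [if_pos hsi]
        have : (0:ℝ) ≤ if i ≤ m then (2:ℝ)^(N-(s+1)) else 0 := by positivity
        linarith
      · rw [if_neg c2]
        positivity
  calc ∑ i ∈ range (N+1), SA N (omg s) (α.take i)
      ≤ ∑ i ∈ range (N+1), ((if i ≤ m then (2:ℝ)^(N-(s+1)) else 0)
          + (if s+1 ≤ i then (2:ℝ)^(N-i) else 0)) := Finset.sum_le_sum key
    _ = (∑ i ∈ range (N+1), (if i ≤ m then (2:ℝ)^(N-(s+1)) else 0))
        + ∑ i ∈ range (N+1), (if s+1 ≤ i then (2:ℝ)^(N-i) else 0) := Finset.sum_add_distrib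
    _ ≤ ((m:ℝ)+1) * 2^(N-(s+1)) + 2 * 2^(N-(s+1)) := by
        have h1 := const_count N m (by omega) ((2:ℝ)^(N-(s+1)))
        have h2 := geo_bound N (s+1) hs
        linarith [h1.le]
    _ ≤ ((m:ℝ) + 3) * 2^(N-(s+1)) := by
        have : (0:ℝ) < 2^(N-(s+1)) := by positivity
        nlinarith

lemma pow_split {a N : ℕ} (h : a ≤ N) : (2:ℝ)^a * 2^(N-a) = 2^N := by
  rw [← pow_add]; congr 1; omega

lemma min_pow (k j : ℕ) : min (2^k) (2^j) = 2^(min k j) := by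
  rcases le_total k j with h | h
  · rw [min_eq_left (Nat.pow_le_pow_right (by norm_num) h), min_eq_left h]
  · rw [min_eq_right (Nat.pow_le_pow_right (by norm_num) h), min_eq_right h]

lemma geom_sum_real (m : ℕ) : ∑ k ∈ range m, (2:ℝ)^k = 2^m - 1 := by
  rw [geom_sum_eq (by norm_num : (2:ℝ) ≠ 1)]
  norm_num

lemma sum3 {n j : ℕ} (hj : j < n) :
    ∑ k ∈ range n, (2:ℝ)^(min k j) * 2^(min (n-1-k) (n-1-j)) ≤ 3 * 2^(n-1) := by
  rw [Finset.range_eq_Ico,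
    ← Finset.sum_Ico_consecutive _ (Nat.zero_le (j+1)) (by omega : j+1 ≤ n)]
  have p1 : ∑ k ∈ Finset.Ico 0 (j+1), (2:ℝ)^(min k j) * 2^(min (n-1-k) (n-1-j))
      ≤ 2 * 2^(n-1) := by
    have e : ∀ k ∈ Finset.Ico 0 (j+1), (2:ℝ)^(min k j) * 2^(min (n-1-k) (n-1-j))
        = 2^k * 2^(n-1-j) := by
      intro k hk; simp only [Finset.mem_Ico] at hk
      rw [min_eq_left (by omega), min_eq_right (by omega)]
    rw [Finset.sum_congr rfl e, ← Finset.sum_mul, ← Finset.range_eq_Ico, geom_sum_real]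
    have e2 : (2:ℝ)^(j+1) * 2^(n-1-j) = 2 * 2^(n-1) := by
      rw [← pow_add, ← pow_succ']
      congr 1; omega
    have hp : (0:ℝ) < 2^(n-1-j) := by positivity
    nlinarith
  have p2 : ∑ k ∈ Finset.Ico (j+1) n, (2:ℝ)^(min k j) * 2^(min (n-1-k) (n-1-j))
      ≤ 2^(n-1) := by
    have e : ∀ k ∈ Finset.Ico (j+1) n, (2:ℝ)^(min k j) * 2^(min (n-1-k) (n-1-j))
        = 2^j * 2^(n-1-k) := by
      intro k hk; simp only [Finset.mem_Ico] at hk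
      rw [min_eq_right (by omega), min_eq_left (by omega)]
    rw [Finset.sum_congr rfl e, ← Finset.mul_sum]
    have hsum : ∑ k ∈ Finset.Ico (j+1) n, (2:ℝ)^(n-1-k) ≤ 2^(n-1-j) := by
      rw [Finset.sum_Ico_eq_sum_range]
      have hn : n - (j+1) = n-1-j := by omega
      rw [hn]
      have e3 : ∀ i ∈ range (n-1-j), (2:ℝ)^(n-1-(j+1+i)) = 2^((n-1-j)-1-i) := by
        intro i hi; simp only [Finset.mem_range] at hi
        congr 1; omega
      rw [Finset.sum_congr rfl e3, Finset.sum_range_reflect, geom_sum_real]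
      norm_num
    have e4 : (2:ℝ)^j * 2^(n-1-j) = 2^(n-1) := pow_split (by omega)
    calc (2:ℝ)^j * ∑ k ∈ Finset.Ico (j+1) n, (2:ℝ)^(n-1-k)
        ≤ 2^j * 2^(n-1-j) := by
          have : (0:ℝ) < 2^j := by positivity
          nlinarith
      _ = 2^(n-1) := e4
  linarith

lemma ind_nonneg (N : ℕ) (ω α : List Bool) : 0 ≤ ind N ω α := by
  unfold ind; positivity

lemma ind_ne_zero {N : ℕ} {ω α : List Bool} (h : ind N ω α ≠ 0) :
    α.length = N ∧ ω <+: α := by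
  by_contra hc
  exact h (if_neg hc)

theorem stmt1' : ∀ C : ℝ, 0 < C →
    ∃ N : ℕ, 1 ≤ N ∧ ∃ μ : List Bool × List Bool → ℝ,
      IsBiMeasureOnBoundary N μ ∧
      (∀ p, 0 < μ p → biV N μ p ≤ 1) ∧
      ∃ p ∈ biVertices N, C ≤ biV N μ p := by
  intro C hC
  set n : ℕ := ⌈48 * C⌉₊ with hn
  have hn1 : 1 ≤ n := Nat.one_le_iff_ne_zero.mpr (by
    simp only [hn, ne_eq, Nat.ceil_eq_zero, not_le]
    positivity)
  set N : ℕ := 2 ^ n with hN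
  have hN1 : 1 ≤ N := Nat.one_le_two_pow
  -- notation
  have hfix : ∀ m : ℕ, (2^m - 1) + 1 = 2^m := fun m =>
    Nat.succ_pred_eq_of_pos (Nat.two_pow_pos m)
  have haN : ∀ k, k < n → 2^k ≤ N := fun k hk => Nat.pow_le_pow_right (by norm_num) (by omega)
  have hbN : ∀ k, k < n → 2^(n-1-k) ≤ N := fun k hk =>
    Nat.pow_le_pow_right (by norm_num) (by omega)
  set w : ℕ → ℝ := fun k =>
    (2:ℝ)^(2^k) * 2^(2^(n-1-k)) * ((2:ℝ)^N)⁻¹ * ((2:ℝ)^N)⁻¹ * ((2:ℝ)^(n-1))⁻¹ * (1/48)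
    with hw
  have hwpos : ∀ k, 0 < w k := fun k => by rw [hw]; positivity
  set ω : ℕ → List Bool := fun k => omg (2^k - 1) with hω
  set τ : ℕ → List Bool := fun k => omg (2^(n-1-k) - 1) with hτ
  set μ : List Bool × List Bool → ℝ :=
    fun r => ∑ k ∈ range n, w k * (ind N (ω k) r.1 * ind N (τ k) r.2) with hμ
  -- key: w k * 2^(N - 2^k) * 2^(N - 2^(n-1-k)) = (2^(n-1))⁻¹ * (1/48)
  have hwkey : ∀ k, k < n →
      w k * ((2:ℝ)^(N - 2^k) * (2:ℝ)^(N - 2^(n-1-k)))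
        = ((2:ℝ)^(n-1))⁻¹ * (1/48) := by
    intro k hk
    have e1 : (2:ℝ)^(2^k) * 2^(N - 2^k) = 2^N := pow_split (haN k hk)
    have e2 : (2:ℝ)^(2^(n-1-k)) * 2^(N - 2^(n-1-k)) = 2^N := pow_split (hbN k hk)
    have hne : ((2:ℝ)^N) ≠ 0 := by positivity
    calc w k * ((2:ℝ)^(N - 2^k) * (2:ℝ)^(N - 2^(n-1-k)))
        = ((2:ℝ)^(2^k) * 2^(N - 2^k)) * ((2:ℝ)^(2^(n-1-k)) * 2^(N - 2^(n-1-k)))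
            * ((2:ℝ)^N)⁻¹ * ((2:ℝ)^N)⁻¹ * ((2:ℝ)^(n-1))⁻¹ * (1/48) := by
          rw [hw]; ring
      _ = ((2:ℝ)^(n-1))⁻¹ * (1/48) := by
          rw [e1, e2]
          field_simp
  -- existence of a support index
  have hsupp : ∀ p : List Bool × List Bool, μ p ≠ 0 →
      ∃ j < n, (p.1.length = N ∧ ω j <+: p.1) ∧ (p.2.length = N ∧ τ j <+: p.2) := by
    intro p hp
    have : ∃ k ∈ range n, w k * (ind N (ω k) p.1 * ind N (τ k) p.2) ≠ 0 := by
      by_contra h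
      push_neg at h
      exact hp (Finset.sum_eq_zero h)
    obtain ⟨j, hj, hne⟩ := this
    simp only [Finset.mem_range] at hj
    have h1 : ind N (ω j) p.1 ≠ 0 := fun h => hne (by rw [h]; ring)
    have h2 : ind N (τ j) p.2 ≠ 0 := fun h => hne (by rw [h]; ring)
    exact ⟨j, hj, ind_ne_zero h1, ind_ne_zero h2⟩
  refine ⟨N, hN1, μ, ⟨?_, ?_⟩, ?_, ?_⟩
  · -- nonneg
    intro p
    apply Finset.sum_nonneg
    intro k _
    have := hwpos k
    have := ind_nonneg N (ω k) p.1
    have := ind_nonneg N (τ k) p.2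
    positivity
  · -- boundary
    intro p hp
    obtain ⟨j, _, ⟨h1, _⟩, ⟨h2, _⟩⟩ := hsupp p hp
    exact ⟨h1, h2⟩
  · -- support bound
    intro p hp
    obtain ⟨j, hj, ⟨hlen1, hpre1⟩, ⟨hlen2, hpre2⟩⟩ := hsupp p (ne_of_gt hp)
    rw [hμ, biV_eq]
    have bound : ∀ k ∈ range n, w k * (FA N (ω k) p.1 * FA N (τ k) p.2)
        ≤ (16 * ((2:ℝ)^(min k j) * 2^(min (n-1-k) (n-1-j)))) * (((2:ℝ)^(n-1))⁻¹ * (1/48)) := by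
      intro k hk
      simp only [Finset.mem_range] at hk
      have hsk : (2^k - 1) + 1 ≤ N := by rw [hfix]; exact haN k hk
      have hsk' : (2^(n-1-k) - 1) + 1 ≤ N := by rw [hfix]; exact hbN k hk
      have hub1 := FA_upper hsk p.1 hlen1 hpre1
      have hub2 := FA_upper hsk' p.2 hlen2 hpre2
      simp only [hfix] at hub1 hub2
      set m1 : ℕ := min (2^k) (2^j) with hm1
      set m2 : ℕ := min (2^(n-1-k)) (2^(n-1-j)) with hm2
      have hm1pos : 1 ≤ m1 := le_min (Nat.one_le_two_pow) (Nat.one_le_two_pow)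
      have hm2pos : 1 ≤ m2 := le_min (Nat.one_le_two_pow) (Nat.one_le_two_pow)
      have step1 : w k * (FA N (ω k) p.1 * FA N (τ k) p.2)
          ≤ w k * ((((m1:ℕ):ℝ) + 3) * 2^(N - 2^k) * ((((m2:ℕ):ℝ) + 3) * 2^(N - 2^(n-1-k)))) := by
        apply mul_le_mul_of_nonneg_left _ (hwpos k).le
        apply mul_le_mul hub1 hub2 (FA_nonneg _ _) (by positivity)
      have step2 : w k * ((((m1:ℕ):ℝ) + 3) * 2^(N - 2^k) * ((((m2:ℕ):ℝ) + 3) * 2^(N - 2^(n-1-k))))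
          = ((((m1:ℕ):ℝ) + 3) * (((m2:ℕ):ℝ) + 3)) * (w k * ((2:ℝ)^(N - 2^k) * (2:ℝ)^(N - 2^(n-1-k)))) := by
        ring
      rw [step2, hwkey k hk] at step1
      refine step1.trans ?_
      apply mul_le_mul_of_nonneg_right _ (by positivity)
      have c1 : ((m1:ℕ):ℝ) = (2:ℝ)^(min k j) := by
        rw [hm1, min_pow]; push_cast; ring
      have c2 : ((m2:ℕ):ℝ) = (2:ℝ)^(min (n-1-k) (n-1-j)) := by
        rw [hm2, min_pow]; push_cast; ring
      rw [← c1, ← c2]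
      have r1 : (1:ℝ) ≤ ((m1:ℕ):ℝ) := by exact_mod_cast hm1pos
      have r2 : (1:ℝ) ≤ ((m2:ℕ):ℝ) := by exact_mod_cast hm2pos
      nlinarith
    calc ∑ k ∈ range n, w k * (FA N (ω k) p.1 * FA N (τ k) p.2)
        ≤ ∑ k ∈ range n,
            (16 * ((2:ℝ)^(min k j) * 2^(min (n-1-k) (n-1-j)))) * (((2:ℝ)^(n-1))⁻¹ * (1/48)) :=
          Finset.sum_le_sum bound
      _ = (∑ k ∈ range n, (2:ℝ)^(min k j) * 2^(min (n-1-k) (n-1-j)))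
            * (16 * (((2:ℝ)^(n-1))⁻¹ * (1/48))) := by
          rw [Finset.sum_mul]
          exact Finset.sum_congr rfl fun k _ => by ring
      _ ≤ (3 * 2^(n-1)) * (16 * (((2:ℝ)^(n-1))⁻¹ * (1/48))) := by
          apply mul_le_mul_of_nonneg_right (sum3 hj) (by positivity)
      _ = 1 := by
          have : ((2:ℝ)^(n-1)) ≠ 0 := by positivity
          field_simp
          ring
  · -- the big point
    refine ⟨(List.replicate N true, List.replicate N true), ?_, ?_⟩
    · rw [biVertices, Finset.mem_product]
      constructor <;> (rw [mem_strings]; simp)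
    · rw [hμ, biV_eq]
      have lower : ∀ k ∈ range n, (1:ℝ)/48
          ≤ w k * (FA N (ω k) (List.replicate N true) * FA N (τ k) (List.replicate N true)) := by
        intro k hk
        simp only [Finset.mem_range] at hk
        have hsk : (2^k - 1) + 1 ≤ N := by rw [hfix]; exact haN k hk
        have hsk' : (2^(n-1-k) - 1) + 1 ≤ N := by rw [hfix]; exact hbN k hk
        have hlb1 := FA_lower hsk
        have hlb2 := FA_lower hsk'
        rw [hfix] at hlb1 hlb2
        have c1 : (((2^k - 1 : ℕ)):ℝ) + 1 = ((2^k : ℕ):ℝ) := by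
          rw [← hfix k]; push_cast; ring
        have c2 : (((2^(n-1-k) - 1 : ℕ)):ℝ) + 1 = ((2^(n-1-k) : ℕ):ℝ) := by
          rw [← hfix (n-1-k)]; push_cast; ring
        rw [c1] at hlb1
        rw [c2] at hlb2
        have prodlb : ((2^k : ℕ):ℝ) * 2^(N - 2^k) * (((2^(n-1-k) : ℕ):ℝ) * 2^(N - 2^(n-1-k)))
            ≤ FA N (ω k) (List.replicate N true) * FA N (τ k) (List.replicate N true) := by
          apply mul_le_mul hlb1 hlb2 (by positivity) (FA_nonneg _ _)
        have final : w k * (((2^k : ℕ):ℝ) * 2^(N - 2^k) * (((2^(n-1-k) : ℕ):ℝ) * 2^(N - 2^(n-1-k))))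
            = 1/48 := by
          have e : w k * (((2^k : ℕ):ℝ) * 2^(N - 2^k) * (((2^(n-1-k) : ℕ):ℝ) * 2^(N - 2^(n-1-k))))
              = (((2^k : ℕ):ℝ) * ((2^(n-1-k) : ℕ):ℝ))
                * (w k * ((2:ℝ)^(N - 2^k) * (2:ℝ)^(N - 2^(n-1-k)))) := by ring
          rw [e, hwkey k hk]
          have e2 : ((2^k : ℕ):ℝ) * ((2^(n-1-k) : ℕ):ℝ) = (2:ℝ)^(n-1) := by
            push_cast
            rw [← pow_add]
            congr 1
            omega
          rw [e2]
          have : ((2:ℝ)^(n-1)) ≠ 0 := by positivity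
          field_simp
        calc (1:ℝ)/48 = w k * (((2^k : ℕ):ℝ) * 2^(N - 2^k) * (((2^(n-1-k) : ℕ):ℝ) * 2^(N - 2^(n-1-k)))) := final.symm
          _ ≤ w k * (FA N (ω k) (List.replicate N true) * FA N (τ k) (List.replicate N true)) :=
            mul_le_mul_of_nonneg_left prodlb (hwpos k).le
      calc C ≤ (n:ℝ)/48 := by
            have := Nat.le_ceil (48 * C)
            rw [← hn] at this
            linarith
        _ = ∑ _k ∈ range n, (1:ℝ)/48 := by
            rw [Finset.sum_const, Finset.card_range, nsmul_eq_mul]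
            ring
        _ ≤ ∑ k ∈ range n, w k * (FA N (ω k) (List.replicate N true) * FA N (τ k) (List.replicate N true)) :=
            Finset.sum_le_sum lower

/-- **The maximum principle fails on the bi-tree**: for every `C > 0` there are a depth `N`
and a measure `μ` on `∂T²` with `V^μ ≤ 1` on `supp μ` but `sup_{T²} V^μ ≥ C`. -/
theorem stmt1 : ∀ C : ℝ, 0 < C →
    ∃ N : ℕ, 1 ≤ N ∧ ∃ μ : List Bool × List Bool → ℝ,
      IsBiMeasureOnBoundary N μ ∧
      (∀ p, 0 < μ p → biV N μ p ≤ 1) ∧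
      ∃ p ∈ biVertices N, C ≤ biV N μ p := stmt1'
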